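/- In local coordinates (x^j, ẋ^j) on TM, the contact system (the Pfaff system of 1-forms annihilating all second-order differential equations) is generated, away from the zero section, by the 1-forms ẋ^j dx^i − ẋ^i dx^j for i, j = 1, …, n, and has rank n − 1 at each point outside the zero section. -/

import Mathlib

/-- The coordinate covector `dx^i` at a point of `TM = ℝⁿ × ℝⁿ`. -/
noncomputable def coordForm (n : ℕ) (i : Fin n) :
    ((Fin n → ℝ) × (Fin n → ℝ)) →ₗ[ℝ] ℝ :=
  (LinearMap.proj i).comp (LinearMap.fst ℝ (Fin n → ℝ) (Fin n → ℝ))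

section aux
variable {n : ℕ}

/-- pullback along fst -/
noncomputable def PhiAux (n : ℕ) :
    ((Fin n → ℝ) →ₗ[ℝ] ℝ) →ₗ[ℝ] (((Fin n → ℝ) × (Fin n → ℝ)) →ₗ[ℝ] ℝ) :=
  LinearMap.lcomp ℝ ℝ (LinearMap.fst ℝ (Fin n → ℝ) (Fin n → ℝ))

lemma PhiAux_inj (n : ℕ) : Function.Injective (PhiAux n) := by
  intro α β h
  apply LinearMap.ext
  intro a
  have := LinearMap.congr_fun h (a, 0)
  simpa [PhiAux] using this

noncomputable def evAux (n : ℕ) (v : Fin n → ℝ) :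
    ((Fin n → ℝ) →ₗ[ℝ] ℝ) →ₗ[ℝ] ℝ := LinearMap.applyₗ v

lemma ker_evAux_finrank (v : Fin n → ℝ) (hv : v ≠ 0) :
    Module.finrank ℝ (LinearMap.ker (evAux n v)) = n - 1 := by
  obtain ⟨k, hk⟩ : ∃ k, v k ≠ 0 := by
    by_contra h; push_neg at h; exact hv (funext h)
  have hsurj : Function.Surjective (evAux n v) := by
    intro r
    exact ⟨(r / v k) • LinearMap.proj k, by simp [evAux, div_mul_cancel₀, hk]⟩
  have h1 := LinearMap.finrank_range_add_finrank_ker (evAux n v)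
  rw [LinearMap.range_eq_top.mpr hsurj, finrank_top] at h1
  have hD : Module.finrank ℝ ((Fin n → ℝ) →ₗ[ℝ] ℝ) = n := by
    simp [Module.finrank_linearMap]
  rw [hD] at h1
  simp at h1
  omega
end aux

/-- Outside the zero section, the contact system at a point
`(x, v)` of `TM` (the space of covectors annihilating all accelerations, i.e.
horizontal covectors `ξ` with `ξ(v, 0) = 0`) is generated by the 1-forms
`ẋ^j dx^i − ẋ^i dx^j`, and has rank `n − 1`. -/
theorem stmt_3 {n : ℕ} (x v : Fin n → ℝ) (hv : v ≠ 0) :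
    ({ξ : ((Fin n → ℝ) × (Fin n → ℝ)) →ₗ[ℝ] ℝ |
        (∀ w, ξ (0, w) = 0) ∧ ξ (v, 0) = 0}
      = ↑(Submodule.span ℝ
          {ξ : ((Fin n → ℝ) × (Fin n → ℝ)) →ₗ[ℝ] ℝ |
            ∃ i j, ξ = v j • coordForm n i - v i • coordForm n j}))
    ∧ Module.finrank ℝ
        (Submodule.span ℝ
          {ξ : ((Fin n → ℝ) × (Fin n → ℝ)) →ₗ[ℝ] ℝ |
            ∃ i j, ξ = v j • coordForm n i - v i • coordForm n j})
      = n - 1 := by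
  classical
  obtain ⟨k, hk⟩ : ∃ k, v k ≠ 0 := by
    by_contra h; push_neg at h; exact hv (funext h)
  set G : Set (((Fin n → ℝ) × (Fin n → ℝ)) →ₗ[ℝ] ℝ) :=
    {ξ | ∃ i j, ξ = v j • coordForm n i - v i • coordForm n j} with hG
  set T : Submodule ℝ (((Fin n → ℝ) × (Fin n → ℝ)) →ₗ[ℝ] ℝ) :=
    Submodule.map (PhiAux n) (LinearMap.ker (evAux n v)) with hT
  -- membership in T characterization
  have hTmem : ∀ ξ, ξ ∈ T ↔ ((∀ w, ξ (0, w) = 0) ∧ ξ (v, 0) = 0) := by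
    intro ξ
    constructor
    · rintro ⟨α, hα, rfl⟩
      refine ⟨fun w => by simp [PhiAux], by simpa [PhiAux, evAux] using hα⟩
    · rintro ⟨h0, hξv⟩
      refine ⟨ξ.comp (LinearMap.inl ℝ _ _), by simpa [evAux] using hξv, ?_⟩
      apply LinearMap.ext
      rintro ⟨a, b⟩
      have : ξ (a, b) = ξ (a, 0) + ξ (0, b) := by
        rw [← map_add]; norm_num
      simp [PhiAux, this, h0 b]
  -- span G = T
  have hspan : Submodule.span ℝ G = T := by
    apply le_antisymm
    · rw [Submodule.span_le]
      rintro ξ ⟨i, j, rfl⟩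
      rw [SetLike.mem_coe, hTmem]
      constructor
      · intro w; simp [coordForm]
      · simp [coordForm]; ring
    · rintro ξ hξ
      rw [hTmem] at hξ
      obtain ⟨h0, hξv⟩ := hξ
      set α : (Fin n → ℝ) →ₗ[ℝ] ℝ := ξ.comp (LinearMap.inl ℝ _ _) with hα
      have hξab : ∀ a b : Fin n → ℝ, ξ (a, b) = α a := by
        intro a b
        have : ξ (a, b) = ξ (a, 0) + ξ (0, b) := by
          rw [← map_add]; norm_num
        simp [hα, this, h0 b]
      have hαv : α v = 0 := by simpa [hα] using hξv
      have hsum : ∑ i, v i * α (fun j => if i = j then 1 else 0) = 0 := by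
        have := α.pi_apply_eq_sum_univ v
        simp only [smul_eq_mul] at this
        rw [← this, hαv]
      have hrepr : ξ = ∑ i, (α ((fun j => if i = j then 1 else 0)) / v k) •
          (v k • coordForm n i - v i • coordForm n k) := by
        apply LinearMap.ext
        rintro ⟨a, b⟩
        rw [hξab a b, α.pi_apply_eq_sum_univ a]
        simp only [LinearMap.coe_sum, Finset.sum_apply, LinearMap.smul_apply,
          LinearMap.sub_apply, coordForm, LinearMap.coe_comp, Function.comp_apply,
          LinearMap.proj_apply, LinearMap.fst_apply, smul_eq_mul]
        have : ∀ i, α ((fun j => if i = j then 1 else 0)) / v k * (v k * a i - v i * a k)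
            = a i * α ((fun j => if i = j then 1 else 0)) - (a k / v k) * (v i * α ((fun j => if i = j then 1 else 0))) := by
          intro i; field_simp
        rw [Finset.sum_congr rfl fun i _ => this i, Finset.sum_sub_distrib,
          ← Finset.mul_sum, hsum]
        simp [mul_comm]
      rw [hrepr]
      exact Submodule.sum_mem _ fun i _ => Submodule.smul_mem _ _
        (Submodule.subset_span ⟨i, k, rfl⟩)
  constructor
  · rw [hspan]
    ext ξ
    simpa using (hTmem ξ).symm
  · rw [hspan, hT]
    rw [← LinearEquiv.finrank_eq
      (Submodule.equivMapOfInjective (PhiAux n) (PhiAux_inj n) (LinearMap.ker (evAux n v)))]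
    exact ker_evAux_finrank v hv
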